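/- Let R ⊆ A be the ℚ-linear span of all elements h^l_n(w) − w where w ranges over monomials and 2 ≤ n ≤ len(w). Then for any monomials w_1, w_2 of lengths n_1, n_2 ≥ 1, the element w_1·η(w_2) − (−1)^{n_1+n_2−1}·w_2·η(w_1) lies in R. -/

import Mathlib

noncomputable section

abbrev FA (k : Type*) [Field k] (p : ℕ) := MonoidAlgebra k (FreeMonoid (Fin p))

def mon (k : Type*) [Field k] {p : ℕ} (l : List (Fin p)) : FA k p :=
  MonoidAlgebra.of k (FreeMonoid (Fin p)) (FreeMonoid.ofList l)

def etaRev (k : Type*) [Field k] {p : ℕ} : List (Fin p) → FA k p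
  | [] => 0
  | [a] => mon k [a]
  | a :: b :: l => mon k [a] * etaRev k (b :: l) - etaRev k (b :: l) * mon k [a]

def etaList (k : Type*) [Field k] {p : ℕ} (l : List (Fin p)) : FA k p :=
  etaRev k l.reverse

lemma mon_append {p : ℕ} (l₁ l₂ : List (Fin p)) : mon ℚ (l₁ ++ l₂) = mon ℚ l₁ * mon ℚ l₂ := by
  simp [mon]

lemma mon_nil {p : ℕ} : mon ℚ ([] : List (Fin p)) = 1 := by
  simp [mon]
  rfl

lemma etaList_singleton {p : ℕ} (a : Fin p) : etaList ℚ [a] = mon ℚ [a] := rfl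

lemma etaList_append_singleton {p : ℕ} (l : List (Fin p)) (a : Fin p) (h : l ≠ []) :
    etaList ℚ (l ++ [a]) = mon ℚ [a] * etaList ℚ l - etaList ℚ l * mon ℚ [a] := by
  unfold etaList
  rw [List.reverse_append]
  cases h' : l.reverse with
  | nil => simp [List.reverse_eq_nil_iff] at h'; exact absurd h' h
  | cons b t => simp [h', etaRev]

def etaLin (k : Type*) [Field k] (p : ℕ) : FA k p →ₗ[k] FA k p :=
  (Finsupp.lift (FA k p) k (FreeMonoid (Fin p)) (fun w => etaList k (FreeMonoid.toList w))).comp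
    (MonoidAlgebra.coeffLinearEquiv k).toLinearMap

/-- The fold move `h^l_n` on a monomial (word). -/
def hl (k : Type*) [Field k] {p : ℕ} (n : ℕ) (l : List (Fin p)) : FA k p :=
  if 2 ≤ n ∧ n ≤ l.length then
    ((-1 : k) ^ (n - 1)) •
      (mon k ((l.drop (n - 1)).take 1) * etaList k (l.take (n - 1)) * mon k (l.drop n))
  else mon k l

def hlLin (k : Type*) [Field k] (p n : ℕ) : FA k p →ₗ[k] FA k p :=
  (Finsupp.lift (FA k p) k (FreeMonoid (Fin p)) (fun w => hl k n (FreeMonoid.toList w))).comp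
    (MonoidAlgebra.coeffLinearEquiv k).toLinearMap

/-- The span of the `H^l` relations `h^l_n(w) - w`. -/
def Rspan (k : Type*) [Field k] (p : ℕ) : Submodule k (FA k p) :=
  Submodule.span k
    {x | ∃ (l : List (Fin p)) (n : ℕ), 2 ≤ n ∧ n ≤ l.length ∧ x = hl k n l - mon k l}

lemma hl_append {p : ℕ} (n : ℕ) (l m : List (Fin p)) (h2 : 2 ≤ n) (hn : n ≤ l.length) :
    hl ℚ n (l ++ m) = hl ℚ n l * mon ℚ m := by
  rw [hl, hl, if_pos ⟨h2, by simp; omega⟩, if_pos ⟨h2, hn⟩]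
  have hd1 : (l ++ m).drop (n-1) = l.drop (n-1) ++ m :=
    List.drop_append_of_le_length (by omega)
  have hd2 : (l ++ m).drop n = l.drop n ++ m :=
    List.drop_append_of_le_length (by omega)
  have ht1 : (l ++ m).take (n-1) = l.take (n-1) :=
    List.take_append_of_le_length (by omega)
  have ht3 : (l.drop (n-1) ++ m).take 1 = (l.drop (n-1)).take 1 :=
    List.take_append_of_le_length (by simp; omega)
  rw [hd1, hd2, ht1, ht3, mon_append, smul_mul_assoc, mul_assoc, mul_assoc, mul_assoc]

lemma rel_mem {p : ℕ} (l : List (Fin p)) (n : ℕ) (h2 : 2 ≤ n) (hn : n ≤ l.length) :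
    hl ℚ n l - mon ℚ l ∈ Rspan ℚ p :=
  Submodule.subset_span ⟨l, n, h2, hn, rfl⟩

lemma Rspan_mul_mon {p : ℕ} {x : FA ℚ p} (hx : x ∈ Rspan ℚ p) (m : List (Fin p)) :
    x * mon ℚ m ∈ Rspan ℚ p := by
  induction hx using Submodule.span_induction with
  | mem y hy =>
    obtain ⟨l, n, h2, hn, rfl⟩ := hy
    rw [sub_mul, ← hl_append n l m h2 hn, ← mon_append]
    exact rel_mem _ _ h2 (by simp; omega)
  | zero => simp only [zero_mul]; exact (Rspan ℚ p).zero_mem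
  | add a b _ _ ha hb => rw [add_mul]; exact add_mem ha hb
  | smul c a _ ha => rw [smul_mul_assoc]; exact Submodule.smul_mem _ _ ha

lemma base_case {p : ℕ} (w₁ : List (Fin p)) (a : Fin p) (h₁ : 1 ≤ w₁.length) :
    mon ℚ w₁ * mon ℚ [a] - ((-1 : ℚ) ^ w₁.length) • (mon ℚ [a] * etaList ℚ w₁) ∈ Rspan ℚ p := by
  have h := rel_mem (w₁ ++ [a]) (w₁.length + 1) (by omega) (by simp)
  have hval : hl ℚ (w₁.length + 1) (w₁ ++ [a])
      = ((-1 : ℚ) ^ w₁.length) • (mon ℚ [a] * etaList ℚ w₁) := by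
    rw [hl, if_pos ⟨by omega, by simp⟩]
    simp [List.drop_left, List.take_left, mon_nil]
  rw [hval, mon_append] at h
  have := (Rspan ℚ p).neg_mem h
  rw [neg_sub] at this
  exact this

/-- Head independence: w₁·η(w₂) − (−1)^{n₁+n₂−1}·w₂·η(w₁) lies in the span R
of the relations h^l_n(w) − w. -/
theorem head_independence {p : ℕ} (w₁ w₂ : List (Fin p))
    (h₁ : 1 ≤ w₁.length) (h₂ : 1 ≤ w₂.length) :
    mon ℚ w₁ * etaList ℚ w₂ -
      ((-1 : ℚ) ^ (w₁.length + w₂.length - 1)) • (mon ℚ w₂ * etaList ℚ w₁) ∈ Rspan ℚ p := by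
  induction w₂ using List.reverseRecOn generalizing w₁ with
  | nil => simp at h₂
  | append_singleton l a ih =>
    rcases eq_or_ne l [] with rfl | hl0
    · simp only [List.nil_append, List.length_singleton, etaList_singleton]
      have he : w₁.length + 1 - 1 = w₁.length := by omega
      rw [he]
      exact base_case w₁ a h₁
    · have hL : 1 ≤ l.length := by
        cases l with
        | nil => exact absurd rfl hl0
        | cons b t => simp
      have m1 := ih (w₁ ++ [a]) (by simp) hL
      have m2 := Rspan_mul_mon (ih w₁ h₁ hL) [a]
      have key := sub_mem m1 m2
      -- rewrite everything
      have hlen1 : (w₁ ++ [a]).length + l.length - 1 = w₁.length + l.length := by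
        simp
      have hlen2 : w₁.length + (l ++ [a]).length - 1 = w₁.length + l.length := by
        simp
      have hw₁ : w₁ ≠ [] := List.length_pos_iff.mp h₁
      rw [hlen1, mon_append, etaList_append_singleton w₁ a hw₁] at key
      rw [hlen2, etaList_append_singleton l a hl0, mon_append]
      have hsucc : w₁.length + l.length - 1 + 1 = w₁.length + l.length := by omega
      have hsgn : ((-1 : ℚ) ^ (w₁.length + l.length))
          = -((-1 : ℚ) ^ (w₁.length + l.length - 1)) := by
        conv_lhs => rw [← hsucc]
        rw [pow_succ, mul_neg_one]
      rw [hsgn] at key ⊢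
      set e : FA ℚ p := ((-1 : ℚ) ^ (w₁.length + l.length - 1)) • 1 with he
      have conv : ∀ x : FA ℚ p, ((-1 : ℚ) ^ (w₁.length + l.length - 1)) • x = e * x := by
        intro x; rw [he, smul_mul_assoc, one_mul]
      have convn : ∀ x : FA ℚ p, (-((-1 : ℚ) ^ (w₁.length + l.length - 1))) • x = -(e * x) := by
        intro x; rw [neg_smul, conv]
      simp only [convn, conv] at key ⊢
      have goal_eq :
          mon ℚ w₁ * (mon ℚ [a] * etaList ℚ l - etaList ℚ l * mon ℚ [a]) -
              -(e * (mon ℚ l * mon ℚ [a] * etaList ℚ w₁))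
          = (mon ℚ w₁ * mon ℚ [a] * etaList ℚ l -
              -(e * (mon ℚ l * (mon ℚ [a] * etaList ℚ w₁ - etaList ℚ w₁ * mon ℚ [a])))) -
            (mon ℚ w₁ * etaList ℚ l - e * (mon ℚ l * etaList ℚ w₁)) * mon ℚ [a] := by
        noncomm_ring
      rw [goal_eq]
      exact key
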